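/- Let s and g be positive integers, let (Ω, P) be a probability space, and let X_1, …, X_s : Ω → ZMod g be independent random variables, each uniformly distributed on ZMod g. Let w : {1, …, s} → ZMod g → ℝ take values in [0,1], and set μ = (1/(s·g)) · ∑_{j=1}^s ∑_{k ∈ ZMod g} w j k. For each i ∈ ZMod g define the random variable μ_i = (1/s) · ∑_{j=1}^s w j (X_j + i). Then for every δ > 0, P( ∃ i ∈ ZMod g, |μ_i − μ| ≥ δ ) ≤ 2·g·exp(−2·s·δ²). -/

import Mathlib

open Real

lemma hoeff_scalar (m : ℝ) (hm0 : 0 ≤ m) (hm1 : m ≤ 1) (t : ℝ) :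
    1 - m + m * exp t ≤ exp (t * m + t ^ 2 / 8) := by
  set D : ℝ → ℝ := fun u => 1 - m + m * exp u with hDdef
  have hDval : ∀ u, D u = 1 - m + m * exp u := fun u => rfl
  have hD : ∀ u, 0 < D u := by
    intro u
    rw [hDval]
    nlinarith [exp_pos u, mul_nonneg hm0 (exp_pos u).le]
  set η : ℝ → ℝ := fun u => m + u / 4 - m * exp u / D u with hηdef
  set φ : ℝ → ℝ := fun u => u * m + u ^ 2 / 8 - Real.log (D u) with hφdef
  have hDderiv : ∀ u, HasDerivAt D (m * exp u) u := by
    intro u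
    exact ((Real.hasDerivAt_exp u).const_mul m).const_add (1 - m)
  have hφderiv : ∀ u, HasDerivAt φ (η u) u := by
    intro u
    have hlog : HasDerivAt (fun v => Real.log (D v)) (m * exp u / D u) u :=
      (hDderiv u).log (hD u).ne'
    have h1 : HasDerivAt (fun v : ℝ => v * m + v ^ 2 / 8) (m + 2 * u / 8) u := by
      have := ((hasDerivAt_id u).mul_const m).add
        (((hasDerivAt_pow 2 u)).div_const 8)
      exact this.congr_deriv (by simp)
    have := h1.sub hlog
    refine this.congr_deriv ?_
    simp only [hηdef]; ring
  have hηderiv : ∀ u, HasDerivAt η (1 / 4 - m * (1 - m) * exp u / (D u) ^ 2) u := by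
    intro u
    have hq : HasDerivAt (fun v => m * exp v / D v)
        ((m * exp u * D u - m * exp u * (m * exp u)) / (D u) ^ 2) u :=
      ((Real.hasDerivAt_exp u).const_mul m).div (hDderiv u) (hD u).ne'
    have h1 : HasDerivAt (fun v : ℝ => m + v / 4) (1 / 4) u := by
      simpa using ((hasDerivAt_id u).div_const 4).const_add m
    have := h1.sub hq
    refine this.congr_deriv ?_
    rw [hDval]
    have h2 : D u = 1 - m + m * exp u := hDval u
    field_simp
    ring
  -- η is monotone
  have hηmono : Monotone η := by
    apply monotone_of_deriv_nonneg
    · exact fun u => (hηderiv u).differentiableAt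
    · intro u
      rw [(hηderiv u).deriv]
      have h4 : 4 * (m * ((1 - m) * exp u)) ≤ (D u) ^ 2 := by
        rw [hDval]
        nlinarith [sq_nonneg (1 - m - m * exp u)]
      have hD2 : (0:ℝ) < (D u) ^ 2 := pow_pos (hD u) 2
      rw [sub_nonneg, div_le_iff₀ hD2]
      ring_nf
      ring_nf at h4
      linarith
  have hη0 : η 0 = 0 := by
    simp only [hηdef]
    rw [hDval]
    simp
  have hφ0 : φ 0 = 0 := by
    simp only [hφdef]
    rw [hDval]
    simp
  -- φ t ≥ 0
  have hφt : 0 ≤ φ t := by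
    rcases le_or_gt 0 t with ht | ht
    · have hmono : MonotoneOn φ (Set.Ici (0:ℝ)) := by
        apply monotoneOn_of_deriv_nonneg (convex_Ici 0)
        · exact continuousOn_of_forall_continuousAt fun u _ => (hφderiv u).differentiableAt.continuousAt
        · intro u hu
          exact ((hφderiv u).differentiableAt).differentiableWithinAt
        · intro u hu
          rw [(hφderiv u).deriv]
          have : η 0 ≤ η u := hηmono (le_of_lt (by simpa using hu))
          linarith [hη0 ▸ this]
      have := hmono (Set.self_mem_Ici) (Set.mem_Ici.2 ht) ht
      linarith [hφ0 ▸ this]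
    · have hanti : AntitoneOn φ (Set.Iic (0:ℝ)) := by
        apply antitoneOn_of_deriv_nonpos (convex_Iic 0)
        · exact continuousOn_of_forall_continuousAt fun u _ => (hφderiv u).differentiableAt.continuousAt
        · intro u hu
          exact ((hφderiv u).differentiableAt).differentiableWithinAt
        · intro u hu
          rw [(hφderiv u).deriv]
          have : η u ≤ η 0 := hηmono (le_of_lt (by simpa using hu))
          linarith [hη0 ▸ this]
      have := hanti (Set.mem_Iic.2 ht.le) (Set.self_mem_Iic) ht.le
      linarith [hφ0 ▸ this]
  -- conclude
  have hlog : Real.log (D t) ≤ t * m + t ^ 2 / 8 := by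
    simp only [hφdef] at hφt; linarith
  have := (Real.log_le_iff_le_exp (hD t)).1 hlog
  rwa [hDval] at this
lemma count_bound (s g : ℕ) [NeZero g] (f : Fin s → ZMod g → ℝ)
    (hf : ∀ j k, f j k ∈ Set.Icc (0:ℝ) 1) (δ : ℝ) (hδ : 0 < δ) :
    (((Finset.univ.filter fun x : Fin s → ZMod g =>
        (∑ j, (1/(g:ℝ)) * ∑ k, f j k) + s * δ ≤ ∑ j, f j (x j)).card : ℕ) : ℝ)
      ≤ (g:ℝ)^s * Real.exp (-2 * s * δ^2) := by
  classical
  have hg : (0:ℝ) < g := by exact_mod_cast (NeZero.pos g)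
  have hcard : (Fintype.card (ZMod g) : ℝ) = g := by rw [ZMod.card]
  set t : ℝ := 4 * δ with ht
  have htpos : 0 < t := by rw [ht]; linarith
  set M : ℝ := ∑ j, (1/(g:ℝ)) * ∑ k, f j k with hM
  set T := Finset.univ.filter fun x : Fin s → ZMod g => M + s * δ ≤ ∑ j, f j (x j) with hT
  have perj : ∀ j : Fin s, ∑ k, Real.exp (t * f j k)
      ≤ g * Real.exp (t * ((1/(g:ℝ)) * ∑ k, f j k) + t^2/8) := by
    intro j
    set S := ∑ k, f j k with hS
    have hS0 : 0 ≤ S := Finset.sum_nonneg fun k _ => (hf j k).1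
    have hS1 : S ≤ g := by
      calc S ≤ ∑ _k : ZMod g, (1:ℝ) := Finset.sum_le_sum fun k _ => (hf j k).2
        _ = g := by simp [hcard]
    have hm0 : 0 ≤ (1/(g:ℝ)) * S := by positivity
    have hm1 : (1/(g:ℝ)) * S ≤ 1 := by
      rw [one_div, inv_mul_le_iff₀ hg]; simpa using hS1
    have step1 : ∑ k, Real.exp (t * f j k) ≤ ∑ k, ((1 - f j k) + f j k * Real.exp t) := by
      apply Finset.sum_le_sum
      intro k _
      obtain ⟨h0, h1⟩ := hf j k
      have := convexOn_exp.2 (Set.mem_univ (0:ℝ)) (Set.mem_univ t)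
        (by linarith : (0:ℝ) ≤ 1 - f j k) h0 (by ring)
      simpa [smul_eq_mul, mul_comm] using this
    have step2 : ∑ k, ((1 - f j k) + f j k * Real.exp t) = ((g:ℝ) - S) + S * Real.exp t := by
      rw [Finset.sum_add_distrib, Finset.sum_sub_distrib, ← Finset.sum_mul, Finset.sum_const]
      simp [hcard, hS]
    have step3 : ((g:ℝ) - S) + S * Real.exp t
        = g * (1 - (1/(g:ℝ)) * S + ((1/(g:ℝ)) * S) * Real.exp t) := by
      field_simp
    calc ∑ k, Real.exp (t * f j k) ≤ ((g:ℝ) - S) + S * Real.exp t := step2 ▸ step1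
      _ = g * (1 - (1/(g:ℝ)) * S + ((1/(g:ℝ)) * S) * Real.exp t) := step3
      _ ≤ g * Real.exp (t * ((1/(g:ℝ)) * S) + t^2/8) :=
          mul_le_mul_of_nonneg_left (hoeff_scalar _ hm0 hm1 t) hg.le
  have key : (T.card : ℝ) * Real.exp (t * (M + s * δ))
      ≤ (g:ℝ)^s * Real.exp (t * M + s * (t^2/8)) := by
    calc (T.card : ℝ) * Real.exp (t * (M + s*δ))
        = ∑ _x ∈ T, Real.exp (t * (M + s*δ)) := by rw [Finset.sum_const, nsmul_eq_mul]
      _ ≤ ∑ x ∈ T, Real.exp (t * ∑ j, f j (x j)) := by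
          apply Finset.sum_le_sum; intro x hx
          have hx' := (Finset.mem_filter.1 hx).2
          exact Real.exp_le_exp.2 (mul_le_mul_of_nonneg_left hx' htpos.le)
      _ ≤ ∑ x : Fin s → ZMod g, Real.exp (t * ∑ j, f j (x j)) :=
          Finset.sum_le_sum_of_subset_of_nonneg (Finset.filter_subset _ _)
            (fun _ _ _ => (Real.exp_pos _).le)
      _ = ∑ x : Fin s → ZMod g, ∏ j, Real.exp (t * f j (x j)) := by
          refine Finset.sum_congr rfl fun x _ => ?_
          rw [Finset.mul_sum, Real.exp_sum]
      _ = ∏ j, ∑ k, Real.exp (t * f j k) := by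
          rw [Finset.prod_univ_sum, Fintype.piFinset_univ]
      _ ≤ ∏ j, ((g:ℝ) * Real.exp (t * ((1/(g:ℝ)) * ∑ k, f j k) + t^2/8)) :=
          Finset.prod_le_prod (fun j _ => Finset.sum_nonneg fun k _ => (Real.exp_pos _).le)
            (fun j _ => perj j)
      _ = (g:ℝ)^s * Real.exp (t * M + s * (t^2/8)) := by
          have hexp : ∑ j : Fin s, (t * ((1/(g:ℝ)) * ∑ k, f j k) + t^2/8)
              = t * M + s * (t^2/8) := by
            rw [Finset.sum_add_distrib, ← Finset.mul_sum, Finset.sum_const,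
              Finset.card_univ, Fintype.card_fin, nsmul_eq_mul, hM]
          rw [Finset.prod_mul_distrib, Finset.prod_const, ← Real.exp_sum, hexp,
            Finset.card_univ, Fintype.card_fin]
  have h2 : (T.card : ℝ)
      = (T.card : ℝ) * Real.exp (t * (M + s*δ)) * Real.exp (-(t*(M + s*δ))) := by
    rw [mul_assoc, ← Real.exp_add]; simp
  calc (T.card : ℝ)
      = (T.card : ℝ) * Real.exp (t * (M + s*δ)) * Real.exp (-(t*(M + s*δ))) := h2
    _ ≤ (g:ℝ)^s * Real.exp (t * M + s * (t^2/8)) * Real.exp (-(t*(M + s*δ))) :=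
        mul_le_mul_of_nonneg_right key (Real.exp_pos _).le
    _ = (g:ℝ)^s * Real.exp (-2 * s * δ^2) := by
        rw [mul_assoc, ← Real.exp_add]
        congr 2
        rw [ht]; ring

open MeasureTheory ProbabilityTheory

theorem hoeffding_union_bound_groups (s g : ℕ) (hs : 0 < s) [NeZero g]
    (Ω : Type*) [MeasurableSpace Ω] (P : Measure Ω) [IsProbabilityMeasure P]
    (X : Fin s → Ω → ZMod g)
    (hXindep : iIndepFun (m := fun _ : Fin s => (⊤ : MeasurableSpace (ZMod g))) X P)
    (hXunif : ∀ (j : Fin s) (k : ZMod g), P {ω | X j ω = k} = (g : ENNReal)⁻¹)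
    (w : Fin s → ZMod g → ℝ) (hw : ∀ j k, w j k ∈ Set.Icc (0 : ℝ) 1)
    (μ : ℝ) (hμ : μ = (1 / ((s : ℝ) * g)) * ∑ j : Fin s, ∑ k : ZMod g, w j k)
    (δ : ℝ) (hδ : 0 < δ) :
    P {ω | ∃ i : ZMod g,
        δ ≤ |(1 / (s : ℝ)) * (∑ j : Fin s, w j (X j ω + i)) - μ|}
      ≤ ENNReal.ofReal (2 * g * Real.exp (-2 * s * δ ^ 2)) := by
  classical
  have hgpos : 0 < g := NeZero.pos g
  have hg : (0:ℝ) < g := by exact_mod_cast hgpos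
  have hsR : (0:ℝ) < s := by exact_mod_cast hs
  set E : ZMod g → Set Ω :=
    fun i => {ω | δ ≤ |(1 / (s : ℝ)) * (∑ j : Fin s, w j (X j ω + i)) - μ|} with hE
  set T : ZMod g → Finset (Fin s → ZMod g) :=
    fun i => Finset.univ.filter
      (fun x : Fin s → ZMod g =>
        δ ≤ |(1 / (s : ℝ)) * (∑ j : Fin s, w j (x j + i)) - μ|) with hTdef
  have hcell : ∀ x : Fin s → ZMod g,
      P (⋂ j ∈ (Finset.univ : Finset (Fin s)), X j ⁻¹' {x j})
        = ((g : ENNReal)⁻¹) ^ s := by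
    intro x
    have hind := hXindep.measure_inter_preimage_eq_mul (Finset.univ)
      (sets := fun j => ({x j} : Set (ZMod g))) (fun i _ => trivial)
    rw [hind]
    have hsing : ∀ j : Fin s, P (X j ⁻¹' {x j}) = (g : ENNReal)⁻¹ := by
      intro j
      have hset : X j ⁻¹' {x j} = {ω | X j ω = x j} := rfl
      rw [hset, hXunif j (x j)]
    rw [Finset.prod_congr rfl (fun j _ => hsing j), Finset.prod_const,
      Finset.card_univ, Fintype.card_fin]
  have hsub : {ω | ∃ i : ZMod g,
      δ ≤ |(1 / (s : ℝ)) * (∑ j : Fin s, w j (X j ω + i)) - μ|}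
      = ⋃ i ∈ (Finset.univ : Finset (ZMod g)), E i := by
    ext ω; simp [hE]
  rw [hsub]
  refine le_trans (measure_biUnion_finset_le _ _) ?_
  have hgroup : ∀ i : ZMod g,
      P (E i) ≤ ENNReal.ofReal (2 * Real.exp (-2 * s * δ ^ 2)) := by
    intro i
    have hcover : E i ⊆ ⋃ x ∈ T i, ⋂ j ∈ (Finset.univ : Finset (Fin s)), X j ⁻¹' {x j} := by
      intro ω hω
      refine Set.mem_iUnion₂.2 ⟨fun j => X j ω, ?_, ?_⟩
      · rw [hTdef]
        simp only [Finset.mem_filter, Finset.mem_univ, true_and]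
        exact hω
      · simp
    have hcardT : ((T i).card : ℝ) ≤ 2 * (g:ℝ)^s * Real.exp (-2 * s * δ^2) := by
      set f : Fin s → ZMod g → ℝ := fun j k => w j (k + i) with hf
      have hfIcc : ∀ j k, f j k ∈ Set.Icc (0:ℝ) 1 := fun j k => hw j (k + i)
      have hfIcc' : ∀ j k, (fun j k => 1 - f j k) j k ∈ Set.Icc (0:ℝ) 1 := by
        intro j k
        obtain ⟨h0, h1⟩ := hfIcc j k
        exact Set.mem_Icc.2 ⟨by simp; linarith, by simp; linarith⟩
      have hsumf : ∀ j, ∑ k, f j k = ∑ k, w j k := by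
        intro j
        exact Equiv.sum_comp (Equiv.addRight i) (w j)
      have hMf : ∑ j, (1/(g:ℝ)) * ∑ k, f j k = s * μ := by
        rw [hμ]
        rw [Finset.sum_congr rfl (fun j _ => by rw [hsumf j]), ← Finset.mul_sum]
        field_simp
      have hMf' : ∑ j, (1/(g:ℝ)) * ∑ k, (1 - f j k) = s * (1 - μ) := by
        have h1 : ∀ j, ∑ k : ZMod g, (1 - f j k) = (g:ℝ) - ∑ k, f j k := by
          intro j
          rw [Finset.sum_sub_distrib, Finset.sum_const, Finset.card_univ, ZMod.card]
          simp
        have h2 : ∀ j : Fin s, (1/(g:ℝ)) * ((g:ℝ) - ∑ k, f j k)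
            = 1 - (1/(g:ℝ)) * ∑ k, f j k := by
          intro j; field_simp
        rw [Finset.sum_congr rfl (fun j _ => by rw [h1 j, h2 j]), Finset.sum_sub_distrib,
          Finset.sum_const, Finset.card_univ, Fintype.card_fin, hMf]
        simp
        ring
      set Tp := Finset.univ.filter
        (fun x : Fin s → ZMod g =>
          (∑ j, (1/(g:ℝ)) * ∑ k, f j k) + s * δ ≤ ∑ j, f j (x j)) with hTp
      set Tm := Finset.univ.filter
        (fun x : Fin s → ZMod g =>
          (∑ j, (1/(g:ℝ)) * ∑ k, (1 - f j k)) + s * δ ≤ ∑ j, (1 - f j (x j))) with hTm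
      have hsubT : T i ⊆ Tp ∪ Tm := by
        intro x hx
        rw [hTdef] at hx
        simp only [Finset.mem_filter, Finset.mem_univ, true_and] at hx
        rw [Finset.mem_union, hTp, hTm]
        simp only [Finset.mem_filter, Finset.mem_univ, true_and]
        have hfx : ∑ j, f j (x j) = ∑ j, w j (x j + i) := rfl
        have hss : (s:ℝ) * ((1 / (s:ℝ)) * (∑ j, w j (x j + i)))
            = ∑ j, w j (x j + i) := by field_simp
        rcases le_abs.1 hx with h | h
        · left
          rw [hMf, hfx]
          have h' := mul_le_mul_of_nonneg_left h hsR.le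
          nlinarith [h', hss]
        · right
          rw [hMf']
          have hsum1 : ∑ j : Fin s, (1 - f j (x j)) = (s:ℝ) - ∑ j, f j (x j) := by
            rw [Finset.sum_sub_distrib, Finset.sum_const, Finset.card_univ, Fintype.card_fin]
            simp
          rw [hsum1, hfx]
          have h' := mul_le_mul_of_nonneg_left h hsR.le
          nlinarith [h', hss]
      have hc1 : ((T i).card : ℝ) ≤ (Tp.card : ℝ) + (Tm.card : ℝ) := by
        have hcc := (Finset.card_le_card hsubT).trans (Finset.card_union_le _ _)
        exact_mod_cast hcc
      have hc2 := count_bound s g f hfIcc δ hδ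
      have hc3 := count_bound s g (fun j k => 1 - f j k) hfIcc' δ hδ
      rw [← hTp] at hc2
      rw [← hTm] at hc3
      linarith
    calc P (E i)
        ≤ ∑ x ∈ T i, P (⋂ j ∈ (Finset.univ : Finset (Fin s)), X j ⁻¹' {x j}) :=
          (measure_mono hcover).trans (measure_biUnion_finset_le _ _)
      _ = ((T i).card : ENNReal) * ((g : ENNReal)⁻¹) ^ s := by
          rw [Finset.sum_congr rfl (fun x _ => hcell x), Finset.sum_const, nsmul_eq_mul]
      _ ≤ ENNReal.ofReal (2 * Real.exp (-2 * s * δ ^ 2)) := by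
          have hgE : ((g:ENNReal)⁻¹)^s = ENNReal.ofReal (((g:ℝ)⁻¹)^s) := by
            rw [ENNReal.ofReal_pow (by positivity), ENNReal.ofReal_inv_of_pos hg,
              ENNReal.ofReal_natCast]
          have hcE : (((T i).card : ℕ) : ENNReal) = ENNReal.ofReal (((T i).card : ℕ) : ℝ) := by
            rw [ENNReal.ofReal_natCast]
          rw [hgE, hcE, ← ENNReal.ofReal_mul (by positivity)]
          apply ENNReal.ofReal_le_ofReal
          have hpow : (g:ℝ)^s * ((g:ℝ)⁻¹)^s = 1 := by
            rw [← mul_pow, mul_inv_cancel₀ hg.ne', one_pow]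
          calc ((T i).card : ℝ) * ((g:ℝ)⁻¹)^s
              ≤ (2 * (g:ℝ)^s * Real.exp (-2 * s * δ^2)) * ((g:ℝ)⁻¹)^s :=
                mul_le_mul_of_nonneg_right hcardT (by positivity)
            _ = 2 * Real.exp (-2 * s * δ^2) * ((g:ℝ)^s * ((g:ℝ)⁻¹)^s) := by ring
            _ = 2 * Real.exp (-2 * s * δ^2) := by rw [hpow, mul_one]
  refine le_trans (Finset.sum_le_sum fun i _ => hgroup i) ?_
  rw [Finset.sum_const, Finset.card_univ, ZMod.card, nsmul_eq_mul,
    ← ENNReal.ofReal_natCast g, ← ENNReal.ofReal_mul (by positivity)]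
  apply ENNReal.ofReal_le_ofReal
  nlinarith [Real.exp_pos (-2 * (s:ℝ) * δ^2)]
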